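/- arXiv:2512.17484 — 3 statements merged into one kernel-verified Lean document; each statement's English description precedes it below -/
import Mathlib

section
/- The canonical map SigmaIsolate : (Σ (a : Isolated A), Isolated (B a)) → Isolated (Σ (a : A), B a), sending a pair of isolated points to the isolated pair, is an embedding; its fiber over an isolated pair ((a,b), h) is equivalent to isIsolated(a) × isIsolated(b). -/
def IsIsolated {A : Type u} (a : A) : Type u := ∀ b : A, Decidable (a = b)

def Isolated (A : Type u) : Type u := Σ a : A, IsIsolated a

/-- A pair of isolated points is isolated in the `Σ`-type. -/
def pairIsolated {A : Type u} {B : A → Type v} {a₀ : A} {b₀ : B a₀}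
    (ha : IsIsolated a₀) (hb : IsIsolated b₀) :
    IsIsolated (⟨a₀, b₀⟩ : Σ a : A, B a) := by
  rintro ⟨a, b⟩
  rcases ha a with hp | p
  · exact isFalse fun h => hp (congrArg Sigma.fst h)
  · subst p
    rcases hb b with hq | q
    · exact isFalse fun h => hq (eq_of_heq (Sigma.mk.inj_iff.mp h).2)
    · subst q; exact isTrue rfl

/-- The canonical map sending a pair of isolated points to the isolated pair. -/
def SigmaIsolate {A : Type u} {B : A → Type v} :
    (Σ a : Isolated A, Isolated (B a.1)) → Isolated (Σ a : A, B a) :=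
  fun x => ⟨⟨x.1.1, x.2.1⟩, pairIsolated x.1.2 x.2.2⟩

instance {A : Type u} (a : A) : Subsingleton (IsIsolated a) := by
  unfold IsIsolated; infer_instance

theorem isolated_ext {A : Type u} {x y : Isolated A} (h : x.1 = y.1) : x = y := by
  cases x; cases y; cases h; exact congrArg _ (Subsingleton.elim _ _)

/-- `SigmaIsolate` is an embedding; its fiber over an isolated pair is
equivalent to the product of the isolatedness predicates of the components. -/
theorem sigmaIsolate_embedding {A : Type u} {B : A → Type v} :
    Function.Injective (SigmaIsolate (A := A) (B := B)) ∧
      ∀ y : Isolated (Σ a : A, B a),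
        Nonempty ({ x : Σ a : Isolated A, Isolated (B a.1) // SigmaIsolate x = y } ≃
          (IsIsolated y.1.1 × IsIsolated y.1.2)) := by
  have inj : Function.Injective (SigmaIsolate (A := A) (B := B)) := by
    rintro ⟨⟨a, ha⟩, ⟨b, hb⟩⟩ ⟨⟨a', ha'⟩, ⟨b', hb'⟩⟩ h
    have h1 : (⟨a, b⟩ : Σ a : A, B a) = ⟨a', b'⟩ := congrArg Sigma.fst h
    obtain ⟨rfl, h2⟩ := Sigma.mk.inj_iff.mp h1
    obtain rfl := eq_of_heq h2
    obtain rfl : ha = ha' := Subsingleton.elim _ _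
    obtain rfl : hb = hb' := Subsingleton.elim _ _
    rfl
  refine ⟨inj, ?_⟩
  rintro ⟨⟨a, b⟩, h⟩
  haveI : Subsingleton
      { x : Σ a : Isolated A, Isolated (B a.1) //
        SigmaIsolate x = (⟨⟨a, b⟩, h⟩ : Isolated (Σ a : A, B a)) } :=
    ⟨fun p q => Subtype.ext (inj (p.2.trans q.2.symm))⟩
  refine ⟨{
    toFun := fun p => ?_
    invFun := fun q =>
      ⟨⟨⟨a, q.1⟩, ⟨b, q.2⟩⟩, isolated_ext rfl⟩
    left_inv := fun _ => Subsingleton.elim _ _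
    right_inv := fun _ => Subsingleton.elim _ _ }⟩
  obtain ⟨⟨⟨a', ha'⟩, ⟨b', hb'⟩⟩, hp⟩ := p
  have h1 : (⟨a', b'⟩ : Σ a : A, B a) = ⟨a, b⟩ := congrArg Sigma.fst hp
  obtain ⟨rfl, h2⟩ := Sigma.mk.inj_iff.mp h1
  obtain rfl := eq_of_heq h2
  exact (ha', hb')
end

section
/- For A : Type and B : A → Type, the map SigmaIsolate is an equivalence if and only if for all a : A and b : B(a), isolatedness of the pair (a,b) in Σ A B implies that both a and b are isolated; moreover SigmaIsolate is an equivalence iff it is surjective. -/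
theorem sigmaIsolate_injective {A : Type u} {B : A → Type v} :
    Function.Injective (SigmaIsolate (A := A) (B := B)) := by
  rintro ⟨⟨a, ha⟩, ⟨b, hb⟩⟩ ⟨⟨a', ha'⟩, ⟨b', hb'⟩⟩ h
  have h1 : (⟨a, b⟩ : Σ a : A, B a) = ⟨a', b'⟩ := congrArg Sigma.fst h
  obtain ⟨rfl, hbe⟩ := Sigma.mk.inj_iff.mp h1
  obtain rfl := eq_of_heq hbe
  obtain rfl : ha = ha' := Subsingleton.elim _ _
  obtain rfl : hb = hb' := Subsingleton.elim _ _
  rfl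

theorem sigmaIsolate_surjective_iff {A : Type u} {B : A → Type v} :
    Function.Surjective (SigmaIsolate (A := A) (B := B)) ↔
      ∀ (a : A) (b : B a), Nonempty (IsIsolated (⟨a, b⟩ : Σ a : A, B a)) →
        Nonempty (IsIsolated a) ∧ Nonempty (IsIsolated b) := by
  constructor
  · intro hs a b ⟨iso⟩
    obtain ⟨⟨⟨a', ha'⟩, ⟨b', hb'⟩⟩, h⟩ := hs ⟨⟨a, b⟩, iso⟩
    have h1 : (⟨a', b'⟩ : Σ a : A, B a) = ⟨a, b⟩ := congrArg Sigma.fst h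
    obtain ⟨rfl, hbe⟩ := Sigma.mk.inj_iff.mp h1
    obtain rfl := eq_of_heq hbe
    exact ⟨⟨ha'⟩, ⟨hb'⟩⟩
  · rintro hc ⟨⟨a, b⟩, iso⟩
    obtain ⟨⟨ha⟩, ⟨hb⟩⟩ := hc a b ⟨iso⟩
    refine ⟨⟨⟨a, ha⟩, ⟨b, hb⟩⟩, ?_⟩
    unfold SigmaIsolate
    congr 1
    exact Subsingleton.elim _ _

/-- `SigmaIsolate` is an equivalence iff isolatedness of a pair implies
isolatedness of both components, and iff it is surjective. -/
theorem sigmaIsolate_equiv_iff {A : Type u} {B : A → Type v} :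
    (Function.Bijective (SigmaIsolate (A := A) (B := B)) ↔
      ∀ (a : A) (b : B a), Nonempty (IsIsolated (⟨a, b⟩ : Σ a : A, B a)) →
        Nonempty (IsIsolated a) ∧ Nonempty (IsIsolated b)) ∧
    (Function.Bijective (SigmaIsolate (A := A) (B := B)) ↔
      Function.Surjective (SigmaIsolate (A := A) (B := B))) := by
  have key : Function.Bijective (SigmaIsolate (A := A) (B := B)) ↔
      Function.Surjective (SigmaIsolate (A := A) (B := B)) :=
    ⟨fun h => h.2, fun h => ⟨sigmaIsolate_injective, h⟩⟩
  exact ⟨key.trans sigmaIsolate_surjective_iff, key⟩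
end

section
/- For S : Type, P : S → Type, C : S → Type, and a function h : (Σ (s : S), (P s → A)) → A that is an embedding, the map WRec_h : W(S,P) → A defined by W-recursion WRec_h(sup(s,f)) = h(s, WRec_h ∘ f) is an embedding. -/
/-- Non-dependent recursion on the W-type `W S P`. -/
def WRec {S : Type u} {P : S → Type u} {A : Type v}
    (h : (Σ s : S, (P s → A)) → A) : WType P → A
  | WType.mk s f => h ⟨s, fun p => WRec h (f p)⟩

/-- W-recursion preserves embeddings: if `h` is an embedding then so is `WRec h`. -/
theorem wRec_embedding {S : Type u} {P : S → Type u} (C : S → Type u) {A : Type v}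
    (h : (Σ s : S, (P s → A)) → A) (hemb : Function.Injective h) :
    Function.Injective (WRec h) := by
  intro x
  induction x with
  | mk s f ih =>
    intro y
    cases y with
    | mk t g =>
      intro heq
      have h2 : (⟨s, fun p => WRec h (f p)⟩ : Σ s : S, (P s → A)) = ⟨t, fun p => WRec h (g p)⟩ :=
        hemb heq
      obtain ⟨rfl, h3⟩ := Sigma.mk.inj_iff.mp h2
      have h3 := eq_of_heq h3
      congr 1
      funext p
      exact ih p (congrFun h3 p)
end
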